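/- For every finite word w on {0,1} with ℓ(w) ≥ 2, letting ê_w denote the orthogonal projection of L²(μ) onto the span of e_w, one has ‖K ê_w − ê_w K‖ = 1, ‖L ê_w − ê_w L‖ = 1, and consequently ‖[D, π(ê_w)]‖ = 1 (operator norms). -/

import Mathlib

open MeasureTheory ContinuousLinearMap
open scoped RealInnerProductSpace InnerProductSpace ENNReal

noncomputable section

/-- The shift space `Ω = {0,1}^ℕ`, with `false` playing the role of the symbol `0`
and `true` of the symbol `1`. -/
abbrev Ω : Type := ℕ → Bool

/-- The shift map `σ`, `σ(x)ₙ = x_{n+1}`. -/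
def shiftMap : Ω → Ω := fun x n => x (n + 1)

/-- Prepending a symbol: `consSeq a x = ax`. -/
def consSeq (a : Bool) (x : Ω) : Ω := fun n => Nat.casesOn n a (fun k => x k)

/-- The cylinder set `[w]` of sequences beginning with the finite word `w`. -/
def cylinder (w : List Bool) : Set Ω := {x | ∀ i : Fin w.length, x (i : ℕ) = w.get i}

/-- The Hilbert space `L²(μ)` (real). -/
abbrev E (μ : Measure Ω) := Lp (α := Ω) ℝ 2 μ

/-- The Hilbert space `H = L²(μ) × L²(μ)` with the norm `√(‖φ‖² + ‖ψ‖²)`. -/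
abbrev HS (μ : Measure Ω) := WithLp 2 (E μ × E μ)

variable {μ : Measure Ω}

/-- The diagonal block operator `(φ, ψ) ↦ (A₁φ, A₂ψ)` on `H`. -/
def blockDiag (A₁ A₂ : E μ →L[ℝ] E μ) : HS μ →L[ℝ] HS μ :=
  ((WithLp.prodContinuousLinearEquiv 2 ℝ (E μ) (E μ)).symm.toContinuousLinearMap).comp
    (((A₁.comp (ContinuousLinearMap.fst ℝ (E μ) (E μ))).prod
        (A₂.comp (ContinuousLinearMap.snd ℝ (E μ) (E μ)))).comp
      (WithLp.prodContinuousLinearEquiv 2 ℝ (E μ) (E μ)).toContinuousLinearMap)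

/-- The antidiagonal block operator `(φ, ψ) ↦ (A₁ψ, A₂φ)` on `H`. -/
def blockAntidiag (A₁ A₂ : E μ →L[ℝ] E μ) : HS μ →L[ℝ] HS μ :=
  ((WithLp.prodContinuousLinearEquiv 2 ℝ (E μ) (E μ)).symm.toContinuousLinearMap).comp
    (((A₁.comp (ContinuousLinearMap.snd ℝ (E μ) (E μ))).prod
        (A₂.comp (ContinuousLinearMap.fst ℝ (E μ) (E μ)))).comp
      (WithLp.prodContinuousLinearEquiv 2 ℝ (E μ) (E μ)).toContinuousLinearMap)

/-- The diagonal representation `π(A)(φ,ψ) = (Aφ, Aψ)`. -/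
def diagRep (A : E μ →L[ℝ] E μ) : HS μ →L[ℝ] HS μ := blockDiag A A

/-- The Dirac operator `D(φ,ψ) = (Kψ, Lφ)` associated with the pair `(K, L)`. -/
def dirac (K L : E μ →L[ℝ] E μ) : HS μ →L[ℝ] HS μ := blockAntidiag K L

/-- The commutator `[D, π(A)]`. -/
def commD (K L A : E μ →L[ℝ] E μ) : HS μ →L[ℝ] HS μ :=
  (dirac K L).comp (diagRep A) - (diagRep A).comp (dirac K L)

/-- The rank-one orthogonal projection onto the span of the unit vector `ψ`:
`φ ↦ ⟪ψ, φ⟫ • ψ`. -/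
def rankOneProj (ψ : E μ) : E μ →L[ℝ] E μ := (innerSL ℝ ψ).smulRight ψ

/-- The Haar-basis element `e_w = 2^{ℓ(w)/2} (χ_{[w1]} - χ_{[w0]})`, as a function on `Ω`. -/
def haarFun (w : List Bool) : Ω → ℝ := fun x =>
  (2 : ℝ) ^ ((w.length : ℝ) / 2) *
    ((cylinder (w ++ [true])).indicator 1 x - (cylinder (w ++ [false])).indicator 1 x)

lemma continuous_shiftMap : Continuous shiftMap :=
  continuous_pi fun n => continuous_apply (n + 1)

lemma continuous_consSeq (a : Bool) : Continuous (consSeq a) := by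
  apply continuous_pi
  intro n
  cases n with
  | zero => exact continuous_const
  | succ k => exact continuous_apply k

/-- The Koopman operator on continuous functions: `f ↦ f ∘ σ`. -/
def koopmanC (f : C(Ω, ℝ)) : C(Ω, ℝ) := f.comp ⟨shiftMap, continuous_shiftMap⟩

/-- The Ruelle operator on continuous functions: `(Lf)(x) = (f(0x) + f(1x))/2`. -/
def ruelleC (f : C(Ω, ℝ)) : C(Ω, ℝ) :=
  ⟨fun x => (f (consSeq false x) + f (consSeq true x)) / 2,
    ((f.continuous.comp (continuous_consSeq false)).add
      (f.continuous.comp (continuous_consSeq true))).div_const 2⟩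

namespace Stmt4Aux

lemma mem_cylinder {v : List Bool} {x : Ω} :
    x ∈ cylinder v ↔ ∀ i : Fin v.length, x (i : ℕ) = v.get i := Iff.rfl

lemma cylinder_nil : cylinder [] = Set.univ := by
  ext x; simp [mem_cylinder]

lemma measurableSet_cylinder (v : List Bool) : MeasurableSet (cylinder v) := by
  have h : cylinder v = ⋂ i : Fin v.length, (fun x : Ω => x (i : ℕ)) ⁻¹' {v.get i} := by
    ext x; simp [mem_cylinder]
  rw [h]
  exact MeasurableSet.iInter fun i =>
    (measurable_pi_apply (i : ℕ)) (MeasurableSet.singleton (v.get i))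

lemma cylinder_subset_of_prefix {u v : List Bool} (h : u <+: v) :
    cylinder v ⊆ cylinder u := by
  intro x hx i
  have hlen : u.length ≤ v.length := h.length_le
  have h2 := hx ⟨(i : ℕ), lt_of_lt_of_le i.2 hlen⟩
  simp only [List.get_eq_getElem] at h2 ⊢
  rw [h2, h.getElem i.2]

lemma prefix_of_mem_inter {u v : List Bool} (hlen : u.length ≤ v.length)
    {x : Ω} (hu : x ∈ cylinder u) (hv : x ∈ cylinder v) : u <+: v := by
  rw [List.prefix_iff_eq_take]
  apply List.ext_getElem
  · simp [hlen]
  intro n h1 h2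
  have e1 := hu ⟨n, h1⟩
  have e2 := hv ⟨n, lt_of_lt_of_le h1 hlen⟩
  simp only [List.get_eq_getElem] at e1 e2
  rw [List.getElem_take]
  rw [← e1, ← e2]

lemma cylinder_inter_cylinder {u v : List Bool} (hlen : u.length ≤ v.length) :
    cylinder u ∩ cylinder v = if u <+: v then cylinder v else ∅ := by
  split_ifs with h
  · exact Set.inter_eq_self_of_subset_right (cylinder_subset_of_prefix h)
  · ext x
    simp only [Set.mem_inter_iff, Set.mem_empty_iff_false, iff_false, not_and]
    intro hu hv
    exact h (prefix_of_mem_inter hlen hu hv)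

lemma isPiSystem_cylinders :
    IsPiSystem {S : Set Ω | ∃ v : List Bool, S = cylinder v} := by
  rintro _ ⟨u, rfl⟩ _ ⟨v, rfl⟩ hne
  rcases le_total u.length v.length with h | h
  · rw [cylinder_inter_cylinder h] at hne ⊢
    by_cases hp : u <+: v
    · rw [if_pos hp]; exact ⟨v, rfl⟩
    · rw [if_neg hp] at hne; simp at hne
  · rw [Set.inter_comm, cylinder_inter_cylinder h] at hne ⊢
    by_cases hp : v <+: u
    · rw [if_pos hp]; exact ⟨u, rfl⟩
    · rw [if_neg hp] at hne; simp at hne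

lemma coord_eq_iUnion (n : ℕ) (b : Bool) :
    (fun x : Ω => x n) ⁻¹' {b} = ⋃ v : Fin n → Bool, cylinder (List.ofFn v ++ [b]) := by
  ext x
  simp only [Set.mem_preimage, Set.mem_singleton_iff, Set.mem_iUnion]
  constructor
  · intro hx
    refine ⟨fun j => x j, fun i => ?_⟩
    have hi : (i : ℕ) < n + 1 := by simpa using i.2
    simp only [List.get_eq_getElem]
    rcases Nat.lt_or_ge (i : ℕ) n with h | h
    · rw [List.getElem_append_left (by simpa using h)]
      simp [List.getElem_ofFn]
    · have hin : (i : ℕ) = n := le_antisymm (Nat.lt_succ_iff.mp hi) h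
      rw [List.getElem_append_right (by simpa using h)]
      simp [hin, hx]
  · rintro ⟨v, hv⟩
    have h := hv ⟨n, by simp⟩
    simp only [List.get_eq_getElem] at h
    rw [List.getElem_append_right (by simp)] at h
    simpa using h

lemma generateFrom_cylinders :
    MeasurableSpace.generateFrom {S : Set Ω | ∃ v : List Bool, S = cylinder v}
      = MeasurableSpace.pi := by
  apply le_antisymm
  · rw [MeasurableSpace.generateFrom_le_iff]
    rintro _ ⟨v, rfl⟩
    exact measurableSet_cylinder v
  · rw [show (MeasurableSpace.pi : MeasurableSpace Ω)
        = ⨆ i, MeasurableSpace.comap (fun x : Ω => x i) inferInstance from rfl]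
    apply iSup_le
    intro i s hs
    obtain ⟨t, -, rfl⟩ := hs
    have h : (fun x : Ω => x i) ⁻¹' t = ⋃ b ∈ t, (fun x : Ω => x i) ⁻¹' {b} := by
      ext y; simp
    rw [h]
    refine MeasurableSet.biUnion (Set.to_countable t) fun b _ => ?_
    rw [coord_eq_iUnion]
    exact MeasurableSet.iUnion fun v =>
      MeasurableSpace.measurableSet_generateFrom ⟨_, rfl⟩

end Stmt4Aux

namespace Stmt4Aux

lemma measurable_shiftMap : Measurable shiftMap :=
  measurable_pi_iff.mpr fun n => measurable_pi_apply (n + 1)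

lemma measurable_consSeq (a : Bool) : Measurable (consSeq a) := by
  apply measurable_pi_iff.mpr
  intro n
  cases n with
  | zero => exact measurable_const
  | succ k => exact measurable_pi_apply k

lemma shift_preimage_cylinder (v : List Bool) :
    shiftMap ⁻¹' cylinder v = cylinder (false :: v) ∪ cylinder (true :: v) := by
  ext x
  simp only [Set.mem_preimage, Set.mem_union, mem_cylinder]
  constructor
  · intro h
    have key : ∀ a : Bool, x 0 = a → ∀ i : Fin (a :: v).length, x (i : ℕ) = (a :: v).get i := by
      intro a ha i
      rcases i with ⟨i, hi⟩
      cases i with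
      | zero => simpa using ha
      | succ k =>
        have := h ⟨k, by simpa using hi⟩
        simpa [shiftMap] using this
    cases hx0 : x 0 with
    | false => exact Or.inl (key false hx0)
    | true => exact Or.inr (key true hx0)
  · rintro (h | h) i
    · have := h ⟨(i : ℕ) + 1, by simpa using i.2⟩
      simpa [shiftMap] using this
    · have := h ⟨(i : ℕ) + 1, by simpa using i.2⟩
      simpa [shiftMap] using this

lemma cons_preimage_cylinder_nil (a : Bool) : consSeq a ⁻¹' cylinder [] = Set.univ := by
  rw [cylinder_nil]; rfl

lemma cons_preimage_cylinder (a b : Bool) (t : List Bool) :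
    consSeq a ⁻¹' cylinder (b :: t) = if a = b then cylinder t else ∅ := by
  ext x
  simp only [Set.mem_preimage, mem_cylinder]
  split_ifs with hab
  · subst hab
    constructor
    · intro h i
      have := h ⟨(i : ℕ) + 1, by simpa using i.2⟩
      simpa [consSeq] using this
    · intro h i
      rcases i with ⟨i, hi⟩
      cases i with
      | zero => simp [consSeq]
      | succ k =>
        have := h ⟨k, by simpa using hi⟩
        simpa [consSeq] using this
  · simp only [Set.mem_empty_iff_false, iff_false]
    intro h
    have := h ⟨0, by simp⟩
    simp [consSeq] at this
    exact hab this

lemma disjoint_cylinder_cons (u v : List Bool) :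
    Disjoint (cylinder (false :: u)) (cylinder (true :: v)) := by
  rw [Set.disjoint_left]
  intro x hx hx'
  have h1 := hx ⟨0, by simp⟩
  have h2 := hx' ⟨0, by simp⟩
  simp at h1 h2
  rw [h1] at h2
  exact Bool.noConfusion h2

variable {μ : MeasureTheory.Measure Ω}

open MeasureTheory in
lemma map_shift_eq [IsProbabilityMeasure μ]
    (hμ : ∀ w : List Bool, μ (cylinder w) = (1 / 2) ^ w.length) :
    μ.map shiftMap = μ := by
  have : IsProbabilityMeasure (μ.map shiftMap) :=
    Measure.isProbabilityMeasure_map measurable_shiftMap.aemeasurable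
  refine MeasureTheory.ext_of_generate_finite _ generateFrom_cylinders.symm
    isPiSystem_cylinders ?_ ?_
  · rintro _ ⟨v, rfl⟩
    rw [Measure.map_apply measurable_shiftMap (measurableSet_cylinder v),
      shift_preimage_cylinder,
      measure_union (disjoint_cylinder_cons v v) (measurableSet_cylinder _),
      hμ, hμ, hμ]
    simp only [List.length_cons]
    rw [pow_succ, ← mul_add, one_div, ENNReal.inv_two_add_inv_two, mul_one]
  · simp

open MeasureTheory in
lemma shift_qmp [IsProbabilityMeasure μ]
    (hμ : ∀ w : List Bool, μ (cylinder w) = (1 / 2) ^ w.length) :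
    Measure.QuasiMeasurePreserving shiftMap μ μ :=
  ⟨measurable_shiftMap, Measure.absolutelyContinuous_of_eq (map_shift_eq hμ)⟩

open MeasureTheory in
lemma map_cons_add [IsProbabilityMeasure μ]
    (hμ : ∀ w : List Bool, μ (cylinder w) = (1 / 2) ^ w.length) :
    μ.map (consSeq false) + μ.map (consSeq true) = μ + μ := by
  have h1 : IsProbabilityMeasure (μ.map (consSeq false)) :=
    Measure.isProbabilityMeasure_map (measurable_consSeq false).aemeasurable
  have h2 : IsProbabilityMeasure (μ.map (consSeq true)) :=
    Measure.isProbabilityMeasure_map (measurable_consSeq true).aemeasurable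
  refine MeasureTheory.ext_of_generate_finite _ generateFrom_cylinders.symm
    isPiSystem_cylinders ?_ ?_
  · rintro _ ⟨v, rfl⟩
    rw [Measure.add_apply, Measure.add_apply,
      Measure.map_apply (measurable_consSeq false) (measurableSet_cylinder v),
      Measure.map_apply (measurable_consSeq true) (measurableSet_cylinder v)]
    cases v with
    | nil =>
      rw [cons_preimage_cylinder_nil, cons_preimage_cylinder_nil, cylinder_nil]
    | cons b t =>
      rw [cons_preimage_cylinder, cons_preimage_cylinder, hμ (b :: t)]
      have harith : μ (cylinder t)
          = (1 / 2 : ℝ≥0∞) ^ (b :: t).length + (1 / 2) ^ (b :: t).length := by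
        rw [hμ, List.length_cons, pow_succ, ← mul_add, one_div,
          ENNReal.inv_two_add_inv_two, mul_one]
      cases b
      · simpa using harith
      · simpa using harith
  · simp

open MeasureTheory in
lemma cons_qmp [IsProbabilityMeasure μ]
    (hμ : ∀ w : List Bool, μ (cylinder w) = (1 / 2) ^ w.length) (a : Bool) :
    Measure.QuasiMeasurePreserving (consSeq a) μ μ := by
  refine ⟨measurable_consSeq a, ?_⟩
  have hle : μ.map (consSeq a) ≤ μ + μ := by
    rw [← map_cons_add hμ]
    cases a
    · exact Measure.le_add_right le_rfl
    · exact Measure.le_add_left le_rfl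
  refine Measure.AbsolutelyContinuous.mk fun s hs h0 => ?_
  have := hle s
  rw [Measure.add_apply, h0, add_zero] at this
  exact le_antisymm this zero_le

end Stmt4Aux

namespace Stmt4Aux

open MeasureTheory

variable {μ : MeasureTheory.Measure Ω}

lemma indicator_comp (S : Set Ω) (f : Ω → Ω) (x : Ω) :
    S.indicator (1 : Ω → ℝ) (f x) = (f ⁻¹' S).indicator 1 x := by
  by_cases h : f x ∈ S <;> simp [Set.indicator_apply, Set.mem_preimage, h]

lemma integral_mul_indicator_comb [IsProbabilityMeasure μ] (c : ℝ) (A B C D : Set Ω)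
    (hA : MeasurableSet A) (hB : MeasurableSet B) (hC : MeasurableSet C) (hD : MeasurableSet D) :
    ∫ x, (c * (A.indicator 1 x - B.indicator 1 x)) * (c * (C.indicator 1 x - D.indicator 1 x)) ∂μ
      = c ^ 2 * (((μ (A ∩ C)).toReal - (μ (A ∩ D)).toReal)
          - ((μ (B ∩ C)).toReal - (μ (B ∩ D)).toReal)) := by
  have hpt : ∀ (S T : Set Ω) (x : Ω),
      (S ∩ T).indicator (1 : Ω → ℝ) x = S.indicator 1 x * T.indicator 1 x := by
    intro S T x; rw [Set.inter_indicator_one]; rfl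
  have hint : ∀ (S T : Set Ω), MeasurableSet S → MeasurableSet T →
      Integrable ((S ∩ T).indicator (1 : Ω → ℝ)) μ := fun S T hS hT =>
    (integrable_const (1 : ℝ)).indicator (hS.inter hT)
  have expand : (fun x => (c * (A.indicator 1 x - B.indicator 1 x)) *
      (c * (C.indicator 1 x - D.indicator 1 x)))
      = fun x => c ^ 2 * (((A ∩ C).indicator (1 : Ω → ℝ) x - (A ∩ D).indicator 1 x)
          - ((B ∩ C).indicator 1 x - (B ∩ D).indicator 1 x)) := by
    funext x
    rw [hpt, hpt, hpt, hpt]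
    ring
  rw [expand, MeasureTheory.integral_const_mul,
    integral_sub (f := fun x => (A ∩ C).indicator (1 : Ω → ℝ) x - (A ∩ D).indicator 1 x)
      (g := fun x => (B ∩ C).indicator (1 : Ω → ℝ) x - (B ∩ D).indicator 1 x)
      ((hint A C hA hC).sub (hint A D hA hD)) ((hint B C hB hC).sub (hint B D hB hD)),
    integral_sub (hint A C hA hC) (hint A D hA hD),
    integral_sub (hint B C hB hC) (hint B D hB hD),
    integral_indicator_one (hA.inter hC), integral_indicator_one (hA.inter hD),
    integral_indicator_one (hB.inter hC), integral_indicator_one (hB.inter hD)]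
  rfl

lemma cylinder_append_inter_empty (v : List Bool) :
    cylinder (v ++ [true]) ∩ cylinder (v ++ [false]) = ∅ := by
  rw [cylinder_inter_cylinder (by simp), if_neg]
  intro h
  have h2 := h.eq_of_length (by simp)
  have h3 := List.append_cancel_left h2
  simp at h3

lemma measure_shift_preimage [IsProbabilityMeasure μ]
    (hμ : ∀ w : List Bool, μ (cylinder w) = (1 / 2) ^ w.length)
    (S : Set Ω) (hS : MeasurableSet S) : μ (shiftMap ⁻¹' S) = μ S := by
  conv_rhs => rw [← map_shift_eq hμ]
  rw [MeasureTheory.Measure.map_apply measurable_shiftMap hS]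

lemma measure_cylinder_inter_shift [IsProbabilityMeasure μ]
    (hμ : ∀ w : List Bool, μ (cylinder w) = (1 / 2) ^ w.length)
    (w : List Bool) (b : Bool) :
    μ (cylinder (w ++ [b]) ∩ shiftMap ⁻¹' cylinder (w ++ [true]))
      = μ (cylinder (w ++ [b]) ∩ shiftMap ⁻¹' cylinder (w ++ [false])) := by
  have key : ∀ b' : Bool, μ (cylinder (w ++ [b]) ∩ shiftMap ⁻¹' cylinder (w ++ [b']))
      = (if w ++ [b] <+: false :: w then ((1 : ℝ≥0∞)/2) ^ (w.length + 2) else 0)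
        + (if w ++ [b] <+: true :: w then ((1 : ℝ≥0∞)/2) ^ (w.length + 2) else 0) := by
    intro b'
    have term : ∀ a : Bool, μ (cylinder (w ++ [b]) ∩ cylinder (a :: (w ++ [b'])))
        = (if w ++ [b] <+: a :: w then ((1 : ℝ≥0∞)/2) ^ (w.length + 2) else 0) := by
      intro a
      rw [cylinder_inter_cylinder (by simp)]
      have hiff : (w ++ [b] <+: a :: (w ++ [b'])) ↔ (w ++ [b] <+: a :: w) := by
        rw [← List.cons_append]
        constructor
        · intro h
          rw [List.prefix_iff_eq_take] at h ⊢
          rwa [List.take_append_of_le_length (by simp)] at h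
        · intro h
          exact h.trans (List.prefix_append _ _)
      rw [if_congr hiff rfl rfl]
      split_ifs with h
      · have hlen' : (a :: (w ++ [b'])).length = w.length + 2 := by simp
        rw [hμ, hlen']
      · exact measure_empty
    have hdisj : Disjoint (cylinder (w ++ [b]) ∩ cylinder (false :: (w ++ [b'])))
        (cylinder (w ++ [b]) ∩ cylinder (true :: (w ++ [b']))) :=
      (disjoint_cylinder_cons _ _).mono Set.inter_subset_right Set.inter_subset_right
    rw [shift_preimage_cylinder, Set.inter_union_distrib_left,
      measure_union hdisj ((measurableSet_cylinder _).inter (measurableSet_cylinder _)),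
      term false, term true]
  rw [key true, key false]

lemma measure_cylinder_toReal [IsProbabilityMeasure μ]
    (hμ : ∀ w : List Bool, μ (cylinder w) = (1 / 2) ^ w.length)
    (v : List Bool) : (μ (cylinder v)).toReal = (1 / 2 : ℝ) ^ v.length := by
  rw [hμ, ENNReal.toReal_pow]
  norm_num

end Stmt4Aux

namespace Stmt4Aux

open MeasureTheory

variable {μ : MeasureTheory.Measure Ω}

lemma haar_arith (n : ℕ) :
    ((2 : ℝ) ^ ((n : ℝ) / 2)) ^ 2 * ((((1 : ℝ)/2) ^ (n+1) - 0) - (0 - ((1 : ℝ)/2) ^ (n+1))) = 1 := by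
  have hc2 : ((2 : ℝ) ^ ((n : ℝ)/2)) ^ 2 = (2 : ℝ) ^ n := by
    rw [← Real.rpow_natCast ((2 : ℝ) ^ ((n : ℝ)/2)) 2, ← Real.rpow_mul (by norm_num),
      show ((n : ℝ)/2) * ((2 : ℕ) : ℝ) = (n : ℝ) by push_cast; ring,
      Real.rpow_natCast]
  have h2l : (2 : ℝ) ^ n * ((1 : ℝ)/2) ^ n = 1 := by rw [← mul_pow]; norm_num
  rw [hc2, pow_succ]
  linear_combination h2l

lemma integral_haar_sq [IsProbabilityMeasure μ]
    (hμ : ∀ w : List Bool, μ (cylinder w) = (1 / 2) ^ w.length) (w : List Bool) :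
    ∫ x, haarFun w x * haarFun w x ∂μ = 1 := by
  have hA : MeasurableSet (cylinder (w ++ [true])) := measurableSet_cylinder _
  have hB : MeasurableSet (cylinder (w ++ [false])) := measurableSet_cylinder _
  have h := integral_mul_indicator_comb (μ := μ) ((2 : ℝ) ^ ((w.length : ℝ) / 2))
    (cylinder (w ++ [true])) (cylinder (w ++ [false]))
    (cylinder (w ++ [true])) (cylinder (w ++ [false])) hA hB hA hB
  simp only [haarFun]
  rw [h, Set.inter_self, Set.inter_self, cylinder_append_inter_empty w,
    Set.inter_comm, cylinder_append_inter_empty w,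
    measure_empty, measure_cylinder_toReal hμ, measure_cylinder_toReal hμ]
  simp only [List.length_append, List.length_cons, List.length_nil, ENNReal.toReal_zero]
  exact haar_arith w.length

lemma integral_haar_shift_sq [IsProbabilityMeasure μ]
    (hμ : ∀ w : List Bool, μ (cylinder w) = (1 / 2) ^ w.length) (w : List Bool) :
    ∫ x, haarFun w (shiftMap x) * haarFun w (shiftMap x) ∂μ = 1 := by
  have hA : MeasurableSet (shiftMap ⁻¹' cylinder (w ++ [true])) :=
    measurable_shiftMap (measurableSet_cylinder _)
  have hB : MeasurableSet (shiftMap ⁻¹' cylinder (w ++ [false])) :=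
    measurable_shiftMap (measurableSet_cylinder _)
  have hrw : (fun x => haarFun w (shiftMap x) * haarFun w (shiftMap x))
      = fun x => ((2 : ℝ) ^ ((w.length : ℝ) / 2) *
          ((shiftMap ⁻¹' cylinder (w ++ [true])).indicator 1 x
            - (shiftMap ⁻¹' cylinder (w ++ [false])).indicator 1 x)) *
        ((2 : ℝ) ^ ((w.length : ℝ) / 2) *
          ((shiftMap ⁻¹' cylinder (w ++ [true])).indicator 1 x
            - (shiftMap ⁻¹' cylinder (w ++ [false])).indicator 1 x)) := by
    funext x
    simp only [haarFun, indicator_comp]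
  rw [hrw, integral_mul_indicator_comb _ _ _ _ _ hA hB hA hB,
    Set.inter_self, Set.inter_self, ← Set.preimage_inter, cylinder_append_inter_empty w,
    ← Set.preimage_inter, Set.inter_comm, cylinder_append_inter_empty w,
    Set.preimage_empty, measure_empty,
    measure_shift_preimage hμ _ (measurableSet_cylinder _),
    measure_shift_preimage hμ _ (measurableSet_cylinder _),
    measure_cylinder_toReal hμ, measure_cylinder_toReal hμ]
  simp only [List.length_append, List.length_cons, List.length_nil, ENNReal.toReal_zero]
  exact haar_arith w.length

lemma integral_haar_mul_shift [IsProbabilityMeasure μ]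
    (hμ : ∀ w : List Bool, μ (cylinder w) = (1 / 2) ^ w.length) (w : List Bool) :
    ∫ x, haarFun w x * haarFun w (shiftMap x) ∂μ = 0 := by
  have hA : MeasurableSet (cylinder (w ++ [true])) := measurableSet_cylinder _
  have hB : MeasurableSet (cylinder (w ++ [false])) := measurableSet_cylinder _
  have hC : MeasurableSet (shiftMap ⁻¹' cylinder (w ++ [true])) :=
    measurable_shiftMap (measurableSet_cylinder _)
  have hD : MeasurableSet (shiftMap ⁻¹' cylinder (w ++ [false])) :=
    measurable_shiftMap (measurableSet_cylinder _)
  have hrw : (fun x => haarFun w x * haarFun w (shiftMap x))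
      = fun x => ((2 : ℝ) ^ ((w.length : ℝ) / 2) *
          ((cylinder (w ++ [true])).indicator 1 x
            - (cylinder (w ++ [false])).indicator 1 x)) *
        ((2 : ℝ) ^ ((w.length : ℝ) / 2) *
          ((shiftMap ⁻¹' cylinder (w ++ [true])).indicator 1 x
            - (shiftMap ⁻¹' cylinder (w ++ [false])).indicator 1 x)) := by
    funext x
    simp only [haarFun, indicator_comp]
  rw [hrw, integral_mul_indicator_comb _ _ _ _ _ hA hB hC hD,
    measure_cylinder_inter_shift hμ w true, measure_cylinder_inter_shift hμ w false]
  ring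

lemma lu_pointwise (b₀ : Bool) (t : List Bool) (x : Ω) :
    (haarFun (b₀ :: t) (consSeq false x) + haarFun (b₀ :: t) (consSeq true x)) / 2
      = ((2 : ℝ) ^ (((b₀ :: t).length : ℝ) / 2) / 2) *
        ((cylinder (t ++ [true])).indicator 1 x - (cylinder (t ++ [false])).indicator 1 x) := by
  simp only [haarFun, indicator_comp, List.cons_append, cons_preimage_cylinder]
  cases b₀ <;> simp <;> ring

lemma integral_haar_cons_sq [IsProbabilityMeasure μ]
    (hμ : ∀ w : List Bool, μ (cylinder w) = (1 / 2) ^ w.length)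
    (b₀ : Bool) (t : List Bool) :
    ∫ x, ((haarFun (b₀ :: t) (consSeq false x) + haarFun (b₀ :: t) (consSeq true x)) / 2) *
        ((haarFun (b₀ :: t) (consSeq false x) + haarFun (b₀ :: t) (consSeq true x)) / 2) ∂μ
      = 1 / 2 := by
  have hA : MeasurableSet (cylinder (t ++ [true])) := measurableSet_cylinder _
  have hB : MeasurableSet (cylinder (t ++ [false])) := measurableSet_cylinder _
  have hrw : (fun x => ((haarFun (b₀ :: t) (consSeq false x) + haarFun (b₀ :: t) (consSeq true x)) / 2) *
        ((haarFun (b₀ :: t) (consSeq false x) + haarFun (b₀ :: t) (consSeq true x)) / 2))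
      = fun x => (((2 : ℝ) ^ (((b₀ :: t).length : ℝ) / 2) / 2) *
          ((cylinder (t ++ [true])).indicator 1 x - (cylinder (t ++ [false])).indicator 1 x)) *
        (((2 : ℝ) ^ (((b₀ :: t).length : ℝ) / 2) / 2) *
          ((cylinder (t ++ [true])).indicator 1 x - (cylinder (t ++ [false])).indicator 1 x)) := by
    funext x
    rw [lu_pointwise]
  rw [hrw, integral_mul_indicator_comb _ _ _ _ _ hA hB hA hB,
    Set.inter_self, Set.inter_self, cylinder_append_inter_empty t,
    Set.inter_comm, cylinder_append_inter_empty t,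
    measure_empty, measure_cylinder_toReal hμ, measure_cylinder_toReal hμ]
  simp only [List.length_append, List.length_cons, List.length_nil, ENNReal.toReal_zero]
  -- goal : (2 ^ ((t.length + 1 : ℕ) : ℝ)/2) / 2) ^ 2 * (((1/2)^(t.length+1) - 0) - (0 - (1/2)^(t.length+1))) = 1/2
  have h := haar_arith (t.length + 1)
  have hsplit : ((2 : ℝ) ^ (((t.length + 1 : ℕ) : ℝ) / 2) / 2) ^ 2
      = ((2 : ℝ) ^ (((t.length + 1 : ℕ) : ℝ) / 2)) ^ 2 / 4 := by ring
  rw [hsplit]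
  push_cast at h ⊢
  linear_combination h / 2
end Stmt4Aux

namespace Stmt4Aux

lemma rankOne_comm_norm_one {F : Type*} [NormedAddCommGroup F] [InnerProductSpace ℝ F]
    (u a b : F) (hu : ‖u‖ = 1) (ha : ‖a‖ ≤ 1) (hb : ‖b‖ ≤ 1)
    (hau : ⟪a, u⟫_ℝ = 0) (hbu : ⟪b, u⟫_ℝ = 0) (hcase : ‖a‖ = 1 ∨ ‖b‖ = 1) :
    ‖(innerSL ℝ u).smulRight a - (innerSL ℝ b).smulRight u‖ = 1 := by
  set T := (innerSL ℝ u).smulRight a - (innerSL ℝ b).smulRight u with hT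
  have hTapp : ∀ φ, T φ = ⟪u, φ⟫_ℝ • a - ⟪b, φ⟫_ℝ • u := fun φ => rfl
  apply le_antisymm
  · refine ContinuousLinearMap.opNorm_le_bound _ zero_le_one fun φ => ?_
    rw [hTapp, one_mul]
    have hsq : ‖⟪u, φ⟫_ℝ • a - ⟪b, φ⟫_ℝ • u‖ ^ 2
        = ⟪u, φ⟫_ℝ ^ 2 * ‖a‖ ^ 2 + ⟪b, φ⟫_ℝ ^ 2 := by
      rw [norm_sub_sq_real, real_inner_smul_left, real_inner_smul_right, hau,
        norm_smul, norm_smul, mul_pow, mul_pow, hu]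
      simp only [Real.norm_eq_abs, sq_abs]
      ring
    have key : ⟪b, φ⟫_ℝ ^ 2 ≤ ‖b‖ ^ 2 * (‖φ‖ ^ 2 - ⟪u, φ⟫_ℝ ^ 2) := by
      have h1 : ⟪b, φ - ⟪u, φ⟫_ℝ • u⟫_ℝ = ⟪b, φ⟫_ℝ := by
        rw [inner_sub_right, real_inner_smul_right, hbu]; ring
      have h2 : ‖φ - ⟪u, φ⟫_ℝ • u‖ ^ 2 = ‖φ‖ ^ 2 - ⟪u, φ⟫_ℝ ^ 2 := by
        rw [norm_sub_sq_real, real_inner_smul_right, norm_smul, mul_pow, hu,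
          real_inner_comm φ u]
        simp only [Real.norm_eq_abs, sq_abs]
        ring
      have h3 := abs_real_inner_le_norm b (φ - ⟪u, φ⟫_ℝ • u)
      have h4 : ⟪b, φ - ⟪u, φ⟫_ℝ • u⟫_ℝ ^ 2 ≤ ‖b‖ ^ 2 * ‖φ - ⟪u, φ⟫_ℝ • u‖ ^ 2 := by
        nlinarith [abs_nonneg ⟪b, φ - ⟪u, φ⟫_ℝ • u⟫_ℝ, sq_abs ⟪b, φ - ⟪u, φ⟫_ℝ • u⟫_ℝ,
          norm_nonneg b, norm_nonneg (φ - ⟪u, φ⟫_ℝ • u)]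
      rw [h1, h2] at h4
      exact h4
    have hb2 : ‖b‖ ^ 2 ≤ 1 := by nlinarith [norm_nonneg b]
    have ha2 : ‖a‖ ^ 2 ≤ 1 := by nlinarith [norm_nonneg a]
    have hfin : ‖⟪u, φ⟫_ℝ • a - ⟪b, φ⟫_ℝ • u‖ ^ 2 ≤ ‖φ‖ ^ 2 := by
      have hiu : ⟪u, φ⟫_ℝ ^ 2 ≤ ‖φ‖ ^ 2 := by
        have h := abs_real_inner_le_norm u φ
        rw [hu, one_mul] at h
        calc ⟪u, φ⟫_ℝ ^ 2 = |⟪u, φ⟫_ℝ| ^ 2 := (sq_abs _).symm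
          _ ≤ ‖φ‖ ^ 2 := pow_le_pow_left₀ (abs_nonneg _) h 2
      nlinarith [sq_nonneg ⟪u, φ⟫_ℝ, sq_nonneg ⟪b, φ⟫_ℝ, sq_nonneg (‖φ‖^2 - ⟪u, φ⟫_ℝ^2)]
    nlinarith [norm_nonneg (⟪u, φ⟫_ℝ • a - ⟪b, φ⟫_ℝ • u), norm_nonneg φ]
  · rcases hcase with h1 | h1
    · have hTu : T u = a := by
        rw [hTapp u, real_inner_self_eq_norm_sq, hu, hbu]
        simp
      have h2 := T.le_opNorm u
      rw [hTu, h1, hu, mul_one] at h2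
      exact h2
    · have hTb : T b = -u := by
        rw [hTapp b, real_inner_comm b u, hbu, real_inner_self_eq_norm_sq, h1]
        simp
      have h2 := T.le_opNorm b
      rw [hTb, norm_neg, hu, h1, mul_one] at h2
      exact h2

end Stmt4Aux


section Stmt4Blocks

variable {μ : Measure Ω}

lemma commD_eq (K L A : E μ →L[ℝ] E μ) :
    commD K L A = blockAntidiag (K ∘L A - A ∘L K) (L ∘L A - A ∘L L) := by
  ext z
  rfl

lemma blockAntidiag_norm (A₁ A₂ : E μ →L[ℝ] E μ) (h1 : ‖A₁‖ = 1) (h2 : ‖A₂‖ = 1) :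
    ‖blockAntidiag A₁ A₂‖ = 1 := by
  have happ : ∀ z : HS μ, blockAntidiag A₁ A₂ z
      = (WithLp.equiv 2 (E μ × E μ)).symm
          (A₁ ((WithLp.equiv 2 (E μ × E μ)) z).2, A₂ ((WithLp.equiv 2 (E μ × E μ)) z).1) :=
    fun z => rfl
  apply le_antisymm
  · refine ContinuousLinearMap.opNorm_le_bound _ zero_le_one fun z => ?_
    rw [one_mul]
    have hz : ‖z‖ ^ 2 = ‖((WithLp.equiv 2 (E μ × E μ)) z).1‖ ^ 2
        + ‖((WithLp.equiv 2 (E μ × E μ)) z).2‖ ^ 2 := by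
      rw [WithLp.prod_norm_sq_eq_of_L2]
      rfl
    have hTz : ‖blockAntidiag A₁ A₂ z‖ ^ 2
        = ‖A₁ ((WithLp.equiv 2 (E μ × E μ)) z).2‖ ^ 2
          + ‖A₂ ((WithLp.equiv 2 (E μ × E μ)) z).1‖ ^ 2 := by
      rw [happ z, WithLp.prod_norm_sq_eq_of_L2]
      rfl
    have e1 : ‖A₁ ((WithLp.equiv 2 (E μ × E μ)) z).2‖ ≤ ‖((WithLp.equiv 2 (E μ × E μ)) z).2‖ := by
      have := A₁.le_opNorm ((WithLp.equiv 2 (E μ × E μ)) z).2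
      rwa [h1, one_mul] at this
    have e2 : ‖A₂ ((WithLp.equiv 2 (E μ × E μ)) z).1‖ ≤ ‖((WithLp.equiv 2 (E μ × E μ)) z).1‖ := by
      have := A₂.le_opNorm ((WithLp.equiv 2 (E μ × E μ)) z).1
      rwa [h2, one_mul] at this
    nlinarith [norm_nonneg (blockAntidiag A₁ A₂ z), norm_nonneg z,
      norm_nonneg ((WithLp.equiv 2 (E μ × E μ)) z).1,
      norm_nonneg ((WithLp.equiv 2 (E μ × E μ)) z).2,
      norm_nonneg (A₁ ((WithLp.equiv 2 (E μ × E μ)) z).2),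
      norm_nonneg (A₂ ((WithLp.equiv 2 (E μ × E μ)) z).1)]
  · have key : ∀ ψ : E μ, ‖A₂ ψ‖ ≤ ‖blockAntidiag A₁ A₂‖ * ‖ψ‖ := by
      intro ψ
      have h3 := (blockAntidiag A₁ A₂).le_opNorm ((WithLp.equiv 2 (E μ × E μ)).symm (ψ, 0))
      have hval : blockAntidiag A₁ A₂ ((WithLp.equiv 2 (E μ × E μ)).symm (ψ, 0))
          = (WithLp.equiv 2 (E μ × E μ)).symm (0, A₂ ψ) := by
        have h0 : blockAntidiag A₁ A₂ ((WithLp.equiv 2 (E μ × E μ)).symm (ψ, 0))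
            = (WithLp.equiv 2 (E μ × E μ)).symm (A₁ 0, A₂ ψ) := rfl
        rw [h0, map_zero]
      have hn1 : ‖(WithLp.equiv 2 (E μ × E μ)).symm (ψ, 0)‖ = ‖ψ‖ := by
        have h4 : ‖(WithLp.equiv 2 (E μ × E μ)).symm (ψ, 0)‖ ^ 2 = ‖ψ‖ ^ 2 + ‖(0 : E μ)‖ ^ 2 := by
          rw [WithLp.prod_norm_sq_eq_of_L2]
          rfl
        rw [norm_zero] at h4
        nlinarith [norm_nonneg ((WithLp.equiv 2 (E μ × E μ)).symm (ψ, 0)), norm_nonneg ψ]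
      have hn2 : ‖(WithLp.equiv 2 (E μ × E μ)).symm ((0 : E μ), A₂ ψ)‖ = ‖A₂ ψ‖ := by
        have h4 : ‖(WithLp.equiv 2 (E μ × E μ)).symm ((0 : E μ), A₂ ψ)‖ ^ 2
            = ‖(0 : E μ)‖ ^ 2 + ‖A₂ ψ‖ ^ 2 := by
          rw [WithLp.prod_norm_sq_eq_of_L2]
          rfl
        rw [norm_zero] at h4
        nlinarith [norm_nonneg ((WithLp.equiv 2 (E μ × E μ)).symm ((0 : E μ), A₂ ψ)),
          norm_nonneg (A₂ ψ)]
      rw [hval, hn2, hn1] at h3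
      exact h3
    have h5 := ContinuousLinearMap.opNorm_le_bound A₂ (norm_nonneg _) key
    rw [h2] at h5
    exact h5

end Stmt4Blocks

end

/-- For any word `w` with `ℓ(w) ≥ 2`, the projection `ê_w` onto `e_w` satisfies
`‖K ê_w − ê_w K‖ = ‖L ê_w − ê_w L‖ = ‖[D, π(ê_w)]‖ = 1`. -/
theorem stmt4
    (μ : Measure Ω) [IsProbabilityMeasure μ]
    (hμ : ∀ w : List Bool, μ (cylinder w) = (1 / 2) ^ w.length)
    (K L : E μ →L[ℝ] E μ)
    (hK : ∀ g : E μ, (K g : Ω → ℝ) =ᵐ[μ] fun x => g (shiftMap x))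
    (hL : ∀ g : E μ, (L g : Ω → ℝ) =ᵐ[μ]
      fun x => (g (consSeq false x) + g (consSeq true x)) / 2)
    (hadj : ContinuousLinearMap.adjoint K = L)
    (e : List Bool → E μ) (he : ∀ w : List Bool, (e w : Ω → ℝ) =ᵐ[μ] haarFun w)
    (w : List Bool) (hw : 2 ≤ w.length) :
    ‖K ∘L rankOneProj (e w) - rankOneProj (e w) ∘L K‖ = 1 ∧
    ‖L ∘L rankOneProj (e w) - rankOneProj (e w) ∘L L‖ = 1 ∧
    ‖commD K L (rankOneProj (e w))‖ = 1 := by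
    classical
  have qs := Stmt4Aux.shift_qmp (μ := μ) hμ
  set u := e w with hu_def
  have hu : ⇑u =ᵐ[μ] haarFun w := he w
  have hKu : ⇑(K u) =ᵐ[μ] fun x => haarFun w (shiftMap x) := (hK u).trans (qs.ae_eq_comp hu)
  have hLu : ⇑(L u) =ᵐ[μ]
      fun x => (haarFun w (consSeq false x) + haarFun w (consSeq true x)) / 2 := by
    have h1 := (Stmt4Aux.cons_qmp (μ := μ) hμ false).ae_eq_comp hu
    have h2 := (Stmt4Aux.cons_qmp (μ := μ) hμ true).ae_eq_comp hu
    filter_upwards [hL u, h1, h2] with x e0 e1 e2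
    rw [e0]
    simp only [Function.comp_apply] at e1 e2
    rw [e1, e2]
  have innerf : ∀ (f g : E μ) (F G : Ω → ℝ), ⇑f =ᵐ[μ] F → ⇑g =ᵐ[μ] G →
      ⟪f, g⟫_ℝ = ∫ x, F x * G x ∂μ := by
    intro f g F G hf hg
    rw [MeasureTheory.L2.inner_def]
    refine integral_congr_ae ?_
    filter_upwards [hf, hg] with x h1 h2
    rw [h1, h2, RCLike.inner_apply, starRingEnd_apply, star_trivial]
    ring
  have huu : ⟪u, u⟫_ℝ = 1 := by
    rw [innerf u u _ _ hu hu]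
    exact Stmt4Aux.integral_haar_sq hμ w
  have hKuKu : ⟪K u, K u⟫_ℝ = 1 := by
    rw [innerf _ _ _ _ hKu hKu]
    exact Stmt4Aux.integral_haar_shift_sq hμ w
  have huKu : ⟪u, K u⟫_ℝ = 0 := by
    rw [innerf _ _ _ _ hu hKu]
    exact Stmt4Aux.integral_haar_mul_shift hμ w
  have hLuLu : ⟪L u, L u⟫_ℝ = 1 / 2 := by
    rw [innerf _ _ _ _ hLu hLu]
    obtain ⟨b₀, t, hw'⟩ : ∃ b₀ t, w = b₀ :: t := by
      cases w with
      | nil => simp at hw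
      | cons a s => exact ⟨a, s, rfl⟩
    rw [hw']
    exact Stmt4Aux.integral_haar_cons_sq hμ b₀ t
  have hnu : ‖u‖ = 1 := by
    nlinarith [real_inner_self_eq_norm_sq u, norm_nonneg u, huu]
  have hnKu : ‖K u‖ = 1 := by
    nlinarith [real_inner_self_eq_norm_sq (K u), norm_nonneg (K u), hKuKu]
  have hnLu : ‖L u‖ ≤ 1 := by
    nlinarith [real_inner_self_eq_norm_sq (L u), norm_nonneg (L u), hLuLu]
  have hKuu : ⟪K u, u⟫_ℝ = 0 := by
    rw [real_inner_comm]
    exact huKu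
  have hLuu : ⟪L u, u⟫_ℝ = 0 := by
    rw [← hadj, ContinuousLinearMap.adjoint_inner_left]
    exact huKu
  have hKP : K ∘L rankOneProj u - rankOneProj u ∘L K
      = (innerSL ℝ u).smulRight (K u) - (innerSL ℝ (L u)).smulRight u := by
    refine ContinuousLinearMap.ext fun φ => ?_
    have hiφ : ⟪u, K φ⟫_ℝ = ⟪L u, φ⟫_ℝ := by
      rw [← hadj, ContinuousLinearMap.adjoint_inner_left]
    simp only [ContinuousLinearMap.sub_apply, ContinuousLinearMap.comp_apply, rankOneProj,
      ContinuousLinearMap.smulRight_apply, innerSL_apply_apply, _root_.map_smul, hiφ]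
  have hLP : L ∘L rankOneProj u - rankOneProj u ∘L L
      = (innerSL ℝ u).smulRight (L u) - (innerSL ℝ (K u)).smulRight u := by
    refine ContinuousLinearMap.ext fun φ => ?_
    have hiφ : ⟪u, L φ⟫_ℝ = ⟪K u, φ⟫_ℝ := by
      rw [← hadj, ContinuousLinearMap.adjoint_inner_right]
    simp only [ContinuousLinearMap.sub_apply, ContinuousLinearMap.comp_apply, rankOneProj,
      ContinuousLinearMap.smulRight_apply, innerSL_apply_apply, _root_.map_smul, hiφ]
  have norm1 : ‖K ∘L rankOneProj u - rankOneProj u ∘L K‖ = 1 := by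
    rw [hKP]
    exact Stmt4Aux.rankOne_comm_norm_one u (K u) (L u) hnu (le_of_eq hnKu) hnLu hKuu hLuu
      (Or.inl hnKu)
  have norm2 : ‖L ∘L rankOneProj u - rankOneProj u ∘L L‖ = 1 := by
    rw [hLP]
    exact Stmt4Aux.rankOne_comm_norm_one u (L u) (K u) hnu hnLu (le_of_eq hnKu) hLuu hKuu
      (Or.inr hnKu)
  refine ⟨norm1, norm2, ?_⟩
  rw [commD_eq]
  exact blockAntidiag_norm _ _ norm1 norm2
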